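/- Let (A, B) be a bimatrix game with zero-sum part Z = (A-B)/2 and coordination part C = (A+B)/2, and let δ > 0, θ > 0. If (r(Z)·δ)² ≥ r(C)² + (θδ)², then for all probability vectors x ∈ Δⁿ, y ∈ Δᵐ with all entries at least δ, C_{(A,B)}(x,y) ≥ θ²δ². -/

import Mathlib

open Finset Matrix

noncomputable def Cfun {n m : ℕ} (A B : Matrix (Fin n) (Fin m) ℝ)
    (x : Fin n → ℝ) (y : Fin m → ℝ) : ℝ :=
  -∑ j, ∑ k, x j * y k * (A j k - ∑ k', A j k' * y k') * (B j k - ∑ j', B j' k * x j')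

def IsProbVec {n : ℕ} (x : Fin n → ℝ) : Prop :=
  (∀ j, 0 ≤ x j) ∧ ∑ j, x j = 1

namespace Stmt13Aux

variable {n m : ℕ}

def rAvg (y : Fin m → ℝ) (K : Matrix (Fin n) (Fin m) ℝ) (j : Fin n) : ℝ :=
  ∑ k, K j k * y k

def cAvg (x : Fin n → ℝ) (K : Matrix (Fin n) (Fin m) ℝ) (k : Fin m) : ℝ :=
  ∑ j, K j k * x j

def tot (x : Fin n → ℝ) (y : Fin m → ℝ) (K : Matrix (Fin n) (Fin m) ℝ) : ℝ :=
  ∑ j, ∑ k, x j * y k * K j k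

def tmat (x : Fin n → ℝ) (y : Fin m → ℝ) (K : Matrix (Fin n) (Fin m) ℝ)
    (j : Fin n) (k : Fin m) : ℝ :=
  K j k - rAvg y K j - cAvg x K k + tot x y K

variable {x : Fin n → ℝ} {y : Fin m → ℝ}

lemma sum_y_cAvg (K : Matrix (Fin n) (Fin m) ℝ) :
    ∑ k, y k * cAvg x K k = tot x y K := by
  unfold cAvg tot
  simp only [Finset.mul_sum]
  rw [Finset.sum_comm]
  exact Finset.sum_congr rfl fun j _ => Finset.sum_congr rfl fun k _ => by ring

lemma sum_x_rAvg (K : Matrix (Fin n) (Fin m) ℝ) :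
    ∑ j, x j * rAvg y K j = tot x y K := by
  unfold rAvg tot
  simp only [Finset.mul_sum]
  exact Finset.sum_congr rfl fun j _ => Finset.sum_congr rfl fun k _ => by ring

lemma f1 (hy1 : ∑ k, y k = 1) (K : Matrix (Fin n) (Fin m) ℝ) (j : Fin n) :
    ∑ k, y k * tmat x y K j k = 0 := by
  have e : ∀ k, y k * tmat x y K j k
      = K j k * y k - y k * rAvg y K j - y k * cAvg x K k + y k * tot x y K := by
    intro k; unfold tmat; ring
  rw [Finset.sum_congr rfl fun k _ => e k, Finset.sum_add_distrib,
    Finset.sum_sub_distrib, Finset.sum_sub_distrib, ← Finset.sum_mul, ← Finset.sum_mul,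
    sum_y_cAvg, hy1]
  unfold rAvg
  ring

lemma f2 (hx1 : ∑ j, x j = 1) (K : Matrix (Fin n) (Fin m) ℝ) (k : Fin m) :
    ∑ j, x j * tmat x y K j k = 0 := by
  have e : ∀ j, x j * tmat x y K j k
      = K j k * x j - x j * rAvg y K j - x j * cAvg x K k + x j * tot x y K := by
    intro j; unfold tmat; ring
  rw [Finset.sum_congr rfl fun j _ => e j, Finset.sum_add_distrib,
    Finset.sum_sub_distrib, Finset.sum_sub_distrib, ← Finset.sum_mul, ← Finset.sum_mul,
    sum_x_rAvg, hx1]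
  unfold cAvg
  ring

lemma orth (hx1 : ∑ j, x j = 1) (hy1 : ∑ k, y k = 1)
    (K : Matrix (Fin n) (Fin m) ℝ) (g : Fin n → ℝ) (h : Fin m → ℝ) :
    ∑ j, ∑ k, x j * y k * tmat x y K j k * (g j + h k) = 0 := by
  have e : ∀ j k, x j * y k * tmat x y K j k * (g j + h k)
      = (x j * g j) * (y k * tmat x y K j k) + (y k * h k) * (x j * tmat x y K j k) := by
    intro j k; ring
  rw [Finset.sum_congr rfl fun j _ => Finset.sum_congr rfl fun k _ => e j k]
  rw [Finset.sum_congr rfl fun j _ => Finset.sum_add_distrib, Finset.sum_add_distrib]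
  have hz1 : ∑ j, ∑ k, (x j * g j) * (y k * tmat x y K j k) = 0 := by
    have : ∀ j, ∑ k, (x j * g j) * (y k * tmat x y K j k)
        = (x j * g j) * ∑ k, y k * tmat x y K j k := fun j => (Finset.mul_sum _ _ _).symm
    rw [Finset.sum_congr rfl fun j _ => this j]
    simp [f1 hy1]
  have hz2 : ∑ j, ∑ k, (y k * h k) * (x j * tmat x y K j k) = 0 := by
    rw [Finset.sum_comm]
    have : ∀ k, ∑ j, (y k * h k) * (x j * tmat x y K j k)
        = (y k * h k) * ∑ j, x j * tmat x y K j k := fun k => (Finset.mul_sum _ _ _).symm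
    rw [Finset.sum_congr rfl fun k _ => this k]
    simp [f2 hx1]
  rw [hz1, hz2, add_zero]

lemma decomp (hx1 : ∑ j, x j = 1) (hy1 : ∑ k, y k = 1)
    (K L : Matrix (Fin n) (Fin m) ℝ) :
    ∑ j, ∑ k, x j * y k * (K j k - ∑ k', K j k' * y k') * (L j k - ∑ j', L j' k * x j')
      = ∑ j, ∑ k, x j * y k * tmat x y K j k * tmat x y L j k := by
  have o1 : ∑ j, ∑ k, x j * y k * tmat x y K j k * (rAvg y L j - tot x y L) = 0 := by
    simpa using orth hx1 hy1 K (fun j => rAvg y L j - tot x y L) (fun _ => (0:ℝ))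
  have o2 : ∑ j, ∑ k, x j * y k * tmat x y L j k * (cAvg x K k - tot x y K) = 0 := by
    simpa using orth hx1 hy1 L (fun _ => (0:ℝ)) (fun k => cAvg x K k - tot x y K)
  have hz : ∑ k, y k * (cAvg x K k - tot x y K) = 0 := by
    simp only [mul_sub, Finset.sum_sub_distrib, ← Finset.sum_mul, sum_y_cAvg, hy1, one_mul,
      sub_self]
  have o3 : ∑ j, ∑ k, (x j * (rAvg y L j - tot x y L)) * (y k * (cAvg x K k - tot x y K)) = 0 := by
    have : ∀ j, ∑ k, (x j * (rAvg y L j - tot x y L)) * (y k * (cAvg x K k - tot x y K))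
        = (x j * (rAvg y L j - tot x y L)) * ∑ k, y k * (cAvg x K k - tot x y K) :=
      fun j => (Finset.mul_sum _ _ _).symm
    rw [Finset.sum_congr rfl fun j _ => this j]
    simp [hz]
  have key : ∀ j k, x j * y k * (K j k - ∑ k', K j k' * y k') * (L j k - ∑ j', L j' k * x j')
      = x j * y k * tmat x y K j k * tmat x y L j k
        + (x j * y k * tmat x y K j k * (rAvg y L j - tot x y L)
        + (x j * y k * tmat x y L j k * (cAvg x K k - tot x y K)
        + (x j * (rAvg y L j - tot x y L)) * (y k * (cAvg x K k - tot x y K)))) := by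
    intro j k
    unfold tmat rAvg cAvg
    ring
  rw [Finset.sum_congr rfl fun j _ => Finset.sum_congr rfl fun k _ => key j k]
  simp only [Finset.sum_add_distrib]
  rw [o1, o2, o3]
  ring

lemma tmat_add {A P Q : Matrix (Fin n) (Fin m) ℝ} (hA : ∀ j k, A j k = P j k + Q j k) :
    ∀ j k, tmat x y A j k = tmat x y P j k + tmat x y Q j k := by
  intro j k
  unfold tmat rAvg cAvg tot
  simp only [hA, add_mul, mul_add, Finset.sum_add_distrib]
  ring

lemma tmat_sub {A P Q : Matrix (Fin n) (Fin m) ℝ} (hA : ∀ j k, A j k = P j k - Q j k) :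
    ∀ j k, tmat x y A j k = tmat x y P j k - tmat x y Q j k := by
  intro j k
  unfold tmat rAvg cAvg tot
  simp only [hA, sub_mul, mul_sub, Finset.sum_sub_distrib]
  ring

lemma proj_min (hx1 : ∑ j, x j = 1) (hy1 : ∑ k, y k = 1)
    (hx0 : ∀ j, 0 ≤ x j) (hy0 : ∀ k, 0 ≤ y k)
    (K : Matrix (Fin n) (Fin m) ℝ) (G : Fin n → ℝ) (H : Fin m → ℝ) :
    (∑ j, ∑ k, x j * y k * tmat x y K j k * tmat x y K j k)
      ≤ ∑ j, ∑ k, x j * y k * (K j k - G j - H k)^2 := by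
  have key : ∀ j k, x j * y k * (K j k - G j - H k)^2
      = x j * y k * tmat x y K j k * tmat x y K j k
        + (x j * y k * tmat x y K j k
            * (2*(rAvg y K j - G j) + 2*(cAvg x K k - tot x y K - H k))
        + x j * y k * ((rAvg y K j - G j) + (cAvg x K k - tot x y K - H k))^2) := by
    intro j k; unfold tmat; ring
  have o : ∑ j, ∑ k, x j * y k * tmat x y K j k
      * (2*(rAvg y K j - G j) + 2*(cAvg x K k - tot x y K - H k)) = 0 := by
    simpa using orth hx1 hy1 K (fun j => 2*(rAvg y K j - G j))
      (fun k => 2*(cAvg x K k - tot x y K - H k))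
  have hQ : 0 ≤ ∑ j, ∑ k, x j * y k
      * ((rAvg y K j - G j) + (cAvg x K k - tot x y K - H k))^2 :=
    Finset.sum_nonneg fun j _ => Finset.sum_nonneg fun k _ =>
      mul_nonneg (mul_nonneg (hx0 j) (hy0 k)) (sq_nonneg _)
  rw [Finset.sum_congr rfl fun j _ => Finset.sum_congr rfl fun k _ => key j k]
  simp only [Finset.sum_add_distrib]
  rw [o]
  linarith

end Stmt13Aux

open Stmt13Aux in
theorem stmt13 {n m : ℕ} (A B : Matrix (Fin n) (Fin m) ℝ) (θ δ : ℝ)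
    (hθ : 0 < θ) (hδ : 0 < δ)
    (Z C : Matrix (Fin n) (Fin m) ℝ)
    (hZ : Z = (1/2 : ℝ) • (A - B)) (hC : C = (1/2 : ℝ) • (A + B))
    (rZ rC : ℝ)
    (hrZ : IsLeast {t : ℝ | 0 ≤ t ∧ ∃ (g : Fin n → ℝ) (h : Fin m → ℝ),
      ∀ j k, |Z j k - g j - h k| ≤ t} rZ)
    (hrC : IsLeast {t : ℝ | 0 ≤ t ∧ ∃ (g : Fin n → ℝ) (h : Fin m → ℝ),
      ∀ j k, |C j k - g j - h k| ≤ t} rC)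
    (hgap : rC^2 + (θ * δ)^2 ≤ (rZ * δ)^2)
    (x : Fin n → ℝ) (y : Fin m → ℝ) (hx : IsProbVec x) (hy : IsProbVec y)
    (hxδ : ∀ j, δ ≤ x j) (hyδ : ∀ k, δ ≤ y k) :
    θ^2 * δ^2 ≤ Cfun A B x y := by
  obtain ⟨hx0, hx1⟩ := hx
  obtain ⟨hy0, hy1⟩ := hy
  have hδ0 : (0:ℝ) ≤ δ := le_of_lt hδ
  have hA : ∀ j k, A j k = Z j k + C j k := by
    intro j k; rw [hZ, hC]
    simp only [Matrix.smul_apply, Matrix.sub_apply, Matrix.add_apply, smul_eq_mul]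
    ring
  have hB : ∀ j k, B j k = C j k - Z j k := by
    intro j k; rw [hZ, hC]
    simp only [Matrix.smul_apply, Matrix.sub_apply, Matrix.add_apply, smul_eq_mul]
    ring
  -- decomposition of Cfun
  have hCf : Cfun A B x y
      = (∑ j, ∑ k, x j * y k * tmat x y Z j k * tmat x y Z j k)
      - (∑ j, ∑ k, x j * y k * tmat x y C j k * tmat x y C j k) := by
    unfold Cfun
    rw [decomp hx1 hy1 A B]
    have hA' := tmat_add (x := x) (y := y) hA
    have hB' := tmat_sub (x := x) (y := y) hB
    have e : ∀ j k, x j * y k * tmat x y A j k * tmat x y B j k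
        = x j * y k * tmat x y C j k * tmat x y C j k
          - x j * y k * tmat x y Z j k * tmat x y Z j k := by
      intro j k; rw [hA' j k, hB' j k]; ring
    rw [Finset.sum_congr rfl fun j _ => Finset.sum_congr rfl fun k _ => e j k]
    rw [Finset.sum_congr rfl fun j _ => Finset.sum_sub_distrib _ _, Finset.sum_sub_distrib]
    ring
  -- lower bound for the Z part
  have hn : Nonempty (Fin n) := by
    rcases Nat.eq_zero_or_pos n with h | h
    · subst h; simp at hx1
    · exact ⟨⟨0, h⟩⟩
  have hm : Nonempty (Fin m) := by
    rcases Nat.eq_zero_or_pos m with h | h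
    · subst h; simp at hy1
    · exact ⟨⟨0, h⟩⟩
  have hSZ : δ^2 * rZ^2 ≤ ∑ j, ∑ k, x j * y k * tmat x y Z j k * tmat x y Z j k := by
    obtain ⟨⟨j0, k0⟩, hmax⟩ := Finite.exists_max (fun p : Fin n × Fin m => |tmat x y Z p.1 p.2|)
    have hMem : |tmat x y Z j0 k0| ∈ {t : ℝ | 0 ≤ t ∧ ∃ (g : Fin n → ℝ) (h : Fin m → ℝ),
        ∀ j k, |Z j k - g j - h k| ≤ t} := by
      refine ⟨abs_nonneg _, rAvg y Z, fun k => cAvg x Z k - tot x y Z, fun j k => ?_⟩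
      have e : Z j k - rAvg y Z j - (cAvg x Z k - tot x y Z) = tmat x y Z j k := by
        unfold tmat; ring
      rw [e]; exact hmax (j, k)
    have hrZM : rZ ≤ |tmat x y Z j0 k0| := hrZ.2 hMem
    have hterm : ∀ j k, 0 ≤ x j * y k * tmat x y Z j k * tmat x y Z j k := by
      intro j k
      have e : x j * y k * tmat x y Z j k * tmat x y Z j k
          = (x j * y k) * (tmat x y Z j k)^2 := by ring
      rw [e]
      exact mul_nonneg (mul_nonneg (hx0 j) (hy0 k)) (sq_nonneg _)
    have h1 : x j0 * y k0 * tmat x y Z j0 k0 * tmat x y Z j0 k0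
        ≤ ∑ k, x j0 * y k * tmat x y Z j0 k * tmat x y Z j0 k :=
      Finset.single_le_sum (fun k _ => hterm j0 k) (Finset.mem_univ k0)
    have h2 : (∑ k, x j0 * y k * tmat x y Z j0 k * tmat x y Z j0 k)
        ≤ ∑ j, ∑ k, x j * y k * tmat x y Z j k * tmat x y Z j k :=
      Finset.single_le_sum (fun j _ => Finset.sum_nonneg fun k _ => hterm j k)
        (Finset.mem_univ j0)
    have hMM : |tmat x y Z j0 k0| * |tmat x y Z j0 k0|
        = tmat x y Z j0 k0 * tmat x y Z j0 k0 := abs_mul_abs_self _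
    have hrr : rZ * rZ ≤ |tmat x y Z j0 k0| * |tmat x y Z j0 k0| :=
      mul_le_mul hrZM hrZM hrZ.1.1 (abs_nonneg _)
    have hxy : δ * δ ≤ x j0 * y k0 :=
      mul_le_mul (hxδ j0) (hyδ k0) hδ0 (le_trans hδ0 (hxδ j0))
    nlinarith [hterm j0 k0, mul_self_nonneg (tmat x y Z j0 k0)]
  -- upper bound for the C part
  have hSC : (∑ j, ∑ k, x j * y k * tmat x y C j k * tmat x y C j k) ≤ rC^2 := by
    obtain ⟨hrC0, g, h, hgh⟩ := hrC.1
    refine le_trans (proj_min hx1 hy1 hx0 hy0 C g h) ?_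
    have hptw : ∀ j k, x j * y k * (C j k - g j - h k)^2 ≤ x j * y k * rC^2 := by
      intro j k
      have habs := abs_le.mp (hgh j k)
      have hsq : (C j k - g j - h k)^2 ≤ rC^2 := sq_le_sq' habs.1 habs.2
      exact mul_le_mul_of_nonneg_left hsq (mul_nonneg (hx0 j) (hy0 k))
    refine le_trans (Finset.sum_le_sum fun j _ => Finset.sum_le_sum fun k _ => hptw j k) ?_
    have e : ∀ j, ∑ k, x j * y k * rC^2 = x j * rC^2 := by
      intro j
      have : ∀ k, x j * y k * rC^2 = (x j * rC^2) * y k := fun k => by ring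
      rw [Finset.sum_congr rfl fun k _ => this k, ← Finset.mul_sum, hy1, mul_one]
    rw [Finset.sum_congr rfl fun j _ => e j, ← Finset.sum_mul, hx1, one_mul]
  nlinarith [hSZ, hSC, hCf, hgap]
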